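/- Let I ≥ 1 be an integer and for each i ∈ {1,…,I} let λᵢ, μᵢ, κ₁ᵢ, κ₂ᵢ > 0. Set ρᵢ = λᵢ/μᵢ, ε̂ᵢ = (κ₁ᵢ + κ₂ᵢ)/2, σ² = Σᵢ 2λᵢ/μᵢ² (with σ > 0 its square root), and ε = σ^{−2} Σᵢ (2λᵢ/μᵢ²) ε̂ᵢ. Then for all real numbers φ₁ᵢ, φ₂ᵢ (i ∈ {1,…,I}): Σᵢ [ φ₁ᵢ²/(2κ₁ᵢ) + ρᵢ φ₂ᵢ²/(2κ₂ᵢ) ] ≥ (1/(2ε)) · ( σ^{−1} Σᵢ (1/μᵢ)( √λᵢ · φ₁ᵢ − √μᵢ · ρᵢ · φ₂ᵢ ) )². -/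

import Mathlib

/-- Collapse of the `2I` per-class ambiguity parameters into the single
parameter `ε` of the reduced game (Section 4.3.3 of the paper): the sum of the
per-class quadratic penalties dominates the quadratic penalty of the aggregated
drift perturbation. -/
theorem ambiguity_parameters_collapse
    (I : ℕ) (hI : 1 ≤ I)
    (lam mu k1 k2 : Fin I → ℝ)
    (hlam : ∀ i, 0 < lam i) (hmu : ∀ i, 0 < mu i)
    (hk1 : ∀ i, 0 < k1 i) (hk2 : ∀ i, 0 < k2 i)
    (rho : Fin I → ℝ) (hrho : ∀ i, rho i = lam i / mu i)
    (ehat : Fin I → ℝ) (hehat : ∀ i, ehat i = (k1 i + k2 i) / 2)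
    (σ2 : ℝ) (hσ2 : σ2 = ∑ i, 2 * lam i / (mu i) ^ 2)
    (σ : ℝ) (hσpos : 0 < σ) (hσsq : σ ^ 2 = σ2)
    (ε : ℝ) (hε : ε = σ2⁻¹ * ∑ i, (2 * lam i / (mu i) ^ 2) * ehat i)
    (φ1 φ2 : Fin I → ℝ) :
    (1 / (2 * ε)) *
        (σ⁻¹ * ∑ i, (1 / mu i) *
          (Real.sqrt (lam i) * φ1 i - Real.sqrt (mu i) * rho i * φ2 i)) ^ 2 ≤
      ∑ i, ((φ1 i) ^ 2 / (2 * k1 i) + rho i * (φ2 i) ^ 2 / (2 * k2 i)) := by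
  set a : Fin I → ℝ := fun i =>
    (1 / mu i) * (Real.sqrt (lam i) * φ1 i - Real.sqrt (mu i) * rho i * φ2 i) with ha
  set c : Fin I → ℝ := fun i => (2 * lam i / (mu i) ^ 2) * ehat i with hc
  have hcpos : ∀ i, 0 < c i := by
    intro i
    have := hlam i; have := hmu i; have := hk1 i; have := hk2 i
    simp only [hc, hehat i]
    positivity
  have hσ2pos : 0 < σ2 := by rw [← hσsq]; positivity
  have hεpos : 0 < ε := by
    rw [hε]
    apply mul_pos (inv_pos.2 hσ2pos)
    apply Finset.sum_pos
    · intro i _; exact hcpos i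
    · exact ⟨⟨0, hI⟩, Finset.mem_univ _⟩
  -- per-class inequality
  have key : ∀ i, a i ^ 2 ≤ c i * (φ1 i ^ 2 / k1 i + rho i * φ2 i ^ 2 / k2 i) := by
    intro i
    have hl := hlam i; have hm := hmu i; have h1 := hk1 i; have h2 := hk2 i
    set L := Real.sqrt (lam i) with hL
    set M := Real.sqrt (mu i) with hM
    have hLpos : 0 < L := Real.sqrt_pos.2 hl
    have hMpos : 0 < M := Real.sqrt_pos.2 hm
    have hL2 : L ^ 2 = lam i := Real.sq_sqrt hl.le
    have hM2 : M ^ 2 = mu i := Real.sq_sqrt hm.le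
    simp only [ha, hc]
    rw [hrho i, hehat i, ← hL, ← hM, ← hL2, ← hM2]
    rw [← sub_nonneg]
    have expand : 2 * L ^ 2 / (M ^ 2) ^ 2 * ((k1 i + k2 i) / 2) *
        (φ1 i ^ 2 / k1 i + L ^ 2 / M ^ 2 * φ2 i ^ 2 / k2 i) -
        (1 / M ^ 2 * (L * φ1 i - M * (L ^ 2 / M ^ 2) * φ2 i)) ^ 2 =
        (L / M ^ 2) ^ 2 * (k2 i * M * φ1 i + k1 i * L * φ2 i) ^ 2 /
          (k1 i * k2 i * M ^ 2) := by
      field_simp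
      ring
    rw [expand]
    positivity
  -- Cauchy–Schwarz
  have cs : (∑ i, a i) ^ 2 ≤ (∑ i, c i) * (∑ i, a i ^ 2 / c i) := by
    have := Finset.sum_mul_sq_le_sq_mul_sq Finset.univ
      (fun i => Real.sqrt (c i)) (fun i => a i / Real.sqrt (c i))
    have heq : ∀ i : Fin I, Real.sqrt (c i) * (a i / Real.sqrt (c i)) = a i := by
      intro i
      have : Real.sqrt (c i) ≠ 0 := ne_of_gt (Real.sqrt_pos.2 (hcpos i))
      field_simp
    calc (∑ i, a i) ^ 2
        = (∑ i, Real.sqrt (c i) * (a i / Real.sqrt (c i))) ^ 2 := by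
          simp only [heq]
      _ ≤ (∑ i, Real.sqrt (c i) ^ 2) * (∑ i, (a i / Real.sqrt (c i)) ^ 2) := this
      _ = (∑ i, c i) * (∑ i, a i ^ 2 / c i) := by
          congr 1
          · exact Finset.sum_congr rfl fun i _ => Real.sq_sqrt (hcpos i).le
          · refine Finset.sum_congr rfl fun i _ => ?_
            rw [div_pow, Real.sq_sqrt (hcpos i).le]
  have hsum2 : (∑ i, a i ^ 2 / c i) ≤
      2 * ∑ i, ((φ1 i) ^ 2 / (2 * k1 i) + rho i * (φ2 i) ^ 2 / (2 * k2 i)) := by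
    rw [Finset.mul_sum]
    refine Finset.sum_le_sum fun i _ => ?_
    rw [div_le_iff₀ (hcpos i)]
    have := key i
    have h1 := hk1 i; have h2 := hk2 i; have hm := hmu i
    calc a i ^ 2 ≤ c i * (φ1 i ^ 2 / k1 i + rho i * φ2 i ^ 2 / k2 i) := key i
      _ = 2 * ((φ1 i) ^ 2 / (2 * k1 i) + rho i * (φ2 i) ^ 2 / (2 * k2 i)) * c i := by
          field_simp
  have hsc : (∑ i, c i) = σ2 * ε := by
    rw [hε, ← mul_assoc, mul_inv_cancel₀ (ne_of_gt hσ2pos), one_mul, hc]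
  have hfin : (∑ i, a i) ^ 2 ≤
      σ2 * ε * (2 * ∑ i, ((φ1 i) ^ 2 / (2 * k1 i) + rho i * (φ2 i) ^ 2 / (2 * k2 i))) := by
    calc (∑ i, a i) ^ 2 ≤ (∑ i, c i) * (∑ i, a i ^ 2 / c i) := cs
      _ ≤ (∑ i, c i) * (2 * ∑ i, ((φ1 i) ^ 2 / (2 * k1 i) + rho i * (φ2 i) ^ 2 / (2 * k2 i))) := by
          apply mul_le_mul_of_nonneg_left hsum2
          exact Finset.sum_nonneg fun i _ => (hcpos i).le
      _ = _ := by rw [hsc]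
  have hσne : σ ≠ 0 := ne_of_gt hσpos
  rw [mul_pow, ← hσsq] at *
  rw [div_mul_eq_mul_div, div_le_iff₀ (by positivity : (0:ℝ) < 2 * ε)]
  calc 1 * ((σ⁻¹) ^ 2 * (∑ i, a i) ^ 2)
      = (σ ^ 2)⁻¹ * (∑ i, a i) ^ 2 := by rw [one_mul, inv_pow]
    _ ≤ (σ ^ 2)⁻¹ * (σ ^ 2 * ε * (2 * ∑ i, ((φ1 i) ^ 2 / (2 * k1 i) + rho i * (φ2 i) ^ 2 / (2 * k2 i)))) := by
        apply mul_le_mul_of_nonneg_left _ (by positivity)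
        exact hfin
    _ = (∑ i, ((φ1 i) ^ 2 / (2 * k1 i) + rho i * (φ2 i) ^ 2 / (2 * k2 i))) * (2 * ε) := by
        field_simp
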